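/- arXiv:0812.0096 — 4 statements merged into one kernel-verified Lean document; each statement's English description precedes it below -/
import Mathlib

section
/- If σᵢ : X → X are proper continuous maps for 1 ≤ i ≤ n, then the projection p : X̃ → X given by p(𝐢,𝐱) = x₀ is a proper map (preimages of compact sets are compact). -/
open Set

/-- The space of infinite tails of the multivariable dynamical system `(X, σ)`:
pairs of sequences `(𝐢, 𝐱)` with `σ_{i k}(x_{k+1}) = x_k` for all `k`. -/
def Tails {n : ℕ} {X : Type*} (σ : Fin n → X → X) :
    Set ((ℕ → Fin n) × (ℕ → X)) :=
  {p | ∀ k, σ (p.1 k) (p.2 (k + 1)) = p.2 k}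

/-- Prepend an element to a sequence. -/
def prepend {α : Type*} (a : α) (s : ℕ → α) : ℕ → α
  | 0 => a
  | k + 1 => s k

/-- The lifted map `σ̃ᵢ(𝐢,𝐱) = (i𝐢, (σᵢ(x₀), 𝐱))` on the ambient product space. -/
def tildeσ {n : ℕ} {X : Type*} (σ : Fin n → X → X) (i : Fin n)
    (p : (ℕ → Fin n) × (ℕ → X)) : (ℕ → Fin n) × (ℕ → X) :=
  (prepend i p.1, prepend (σ i (p.2 0)) p.2)

/-- The shift map `τ(𝐢,𝐱) = ((i₁,i₂,…),(x₁,x₂,…))`. -/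
def tau {n : ℕ} {X : Type*} (p : (ℕ → Fin n) × (ℕ → X)) :
    (ℕ → Fin n) × (ℕ → X) :=
  (fun k => p.1 (k + 1), fun k => p.2 (k + 1))

/-- For a word `w = i₁…i_k`, the map `σ̃_w = σ̃_{i₁} ∘ ⋯ ∘ σ̃_{i_k}`. -/
def tildeσW {n : ℕ} {X : Type*} (σ : Fin n → X → X) (w : List (Fin n)) :
    (ℕ → Fin n) × (ℕ → X) → (ℕ → Fin n) × (ℕ → X) :=
  w.foldr (fun i f => tildeσ σ i ∘ f) id

/-- If the `σᵢ` are proper continuous maps, then the projection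
`p : X̃ → X`, `p(𝐢,𝐱) = x₀`, is proper: preimages of compact sets are compact. -/
theorem stmt_4 {n : ℕ} {X : Type*} [TopologicalSpace X] [T2Space X]
    [LocallyCompactSpace X] (σ : Fin n → X → X)
    (hσ : ∀ i, Continuous (σ i)) (hprop : ∀ i, IsProperMap (σ i)) :
    ∀ K : Set X, IsCompact K → IsCompact {p ∈ Tails σ | p.2 0 ∈ K} := by
  intro K hK
  -- the compact sets K_k
  set Kseq : ℕ → Set X := fun k => Nat.rec K (fun _ s => ⋃ i, σ i ⁻¹' s) k with hKseq
  have hKseq0 : Kseq 0 = K := rfl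
  have hKseqS : ∀ k, Kseq (k + 1) = ⋃ i, σ i ⁻¹' Kseq k := fun k => rfl
  have hKc : ∀ k, IsCompact (Kseq k) := by
    intro k
    induction k with
    | zero => exact hK
    | succ k ih =>
      rw [hKseqS]
      exact isCompact_iUnion fun i => (hprop i).isCompact_preimage ih
  -- the ambient compact set
  have hT : IsCompact ((univ : Set (ℕ → Fin n)) ×ˢ (univ.pi Kseq)) :=
    isCompact_univ.prod (isCompact_univ_pi hKc)
  apply hT.of_isClosed_subset
  · -- closedness
    have h1 : IsClosed (Tails σ) := by
      have : Tails σ = ⋂ k, ⋃ i : Fin n,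
          {p : (ℕ → Fin n) × (ℕ → X) | p.1 k = i} ∩
          {p | σ i (p.2 (k + 1)) = p.2 k} := by
        ext p
        simp only [Tails, mem_setOf_eq, mem_iInter, mem_iUnion, mem_inter_iff]
        constructor
        · intro h k; exact ⟨p.1 k, rfl, h k⟩
        · intro h k; obtain ⟨i, hi, h⟩ := h k; rw [hi]; exact h
      rw [this]
      refine isClosed_iInter fun k => ?_
      refine isClosed_iUnion_of_finite fun i => IsClosed.inter ?_ ?_
      · exact isClosed_eq ((continuous_apply k).comp continuous_fst)
          continuous_const
      · exact isClosed_eq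
          ((hσ i).comp ((continuous_apply (k + 1)).comp continuous_snd))
          ((continuous_apply k).comp continuous_snd)
    have h2 : IsClosed {p : (ℕ → Fin n) × (ℕ → X) | p.2 0 ∈ K} :=
      hK.isClosed.preimage ((continuous_apply 0).comp continuous_snd)
    exact h1.inter h2
  · -- inclusion
    rintro p ⟨hp, hp0⟩
    refine ⟨mem_univ _, fun k _ => ?_⟩
    induction k with
    | zero => exact hp0
    | succ k ih =>
      rw [hKseqS]
      exact mem_iUnion.mpr ⟨p.1 k, by rw [mem_preimage, hp k]; exact ih (mem_univ k)⟩
end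

section
/- Every point of X̃ is the start of a unique infinite tail for the system (X̃, σ̃); consequently the covering system of X̃ is canonically homeomorphic to X̃ itself (i.e., X̃̃ ≅ X̃ via the natural projection). -/
open Set

/-- `σ̃ᵢ` as a self-map of the tails space `X̃`. -/
def tildeσSub {n : ℕ} {X : Type*} (σ : Fin n → X → X) (i : Fin n)
    (z : Tails σ) : Tails σ :=
  ⟨tildeσ σ i z.1, by
    intro k
    cases k with
    | zero => rfl
    | succ m => exact z.2 m⟩

/-- `τ` as a self-map of the tails space `X̃`. -/
def tauSub {n : ℕ} {X : Type*} (σ : Fin n → X → X) (z : Tails σ) : Tails σ :=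
  ⟨tau z.1, fun k => z.2 (k + 1)⟩

section Aux

variable {n : ℕ} {X : Type*}

lemma key_tilde_tau (σ : Fin n → X → X) (z : Tails σ) :
    tildeσSub σ (z.1.1 0) (tauSub σ z) = z := by
  apply Subtype.ext
  apply Prod.ext
  · funext m; cases m with
    | zero => rfl
    | succ m => rfl
  · funext m; cases m with
    | zero => exact z.2 0
    | succ m => rfl

lemma tilde_eq (σ : Fin n → X → X) {i : Fin n} {w u : Tails σ}
    (h : tildeσSub σ i w = u) : w = tauSub σ u ∧ i = u.1.1 0 := by
  constructor
  · refine Subtype.ext (Prod.ext (funext fun m => ?_) (funext fun m => ?_))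
    · show w.1.1 m = u.1.1 (m + 1)
      rw [← h]; rfl
    · show w.1.2 m = u.1.2 (m + 1)
      rw [← h]; rfl
  · rw [← h]; rfl

/-- The canonical tail starting at `z`. -/
def tailOf (σ : Fin n → X → X) (z : Tails σ) : (ℕ → Fin n) × (ℕ → ↥(Tails σ)) :=
  (fun k => (((tauSub σ)^[k] z) : Tails σ).1.1 0, fun k => (tauSub σ)^[k] z)

lemma tailOf_mem (σ : Fin n → X → X) (z : Tails σ) :
    tailOf σ z ∈ Tails (tildeσSub σ) := by
  intro k
  show tildeσSub σ (((tauSub σ)^[k] z).1.1 0) ((tauSub σ)^[k+1] z) = (tauSub σ)^[k] z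
  rw [Function.iterate_succ_apply']
  exact key_tilde_tau σ _

lemma tail_unique (σ : Fin n → X → X) (z : Tails σ)
    (t : (ℕ → Fin n) × (ℕ → ↥(Tails σ))) (ht : t ∈ Tails (tildeσSub σ))
    (h0 : t.2 0 = z) : t = tailOf σ z := by
  have hsnd : ∀ k, t.2 k = (tauSub σ)^[k] z := by
    intro k
    induction k with
    | zero => exact h0
    | succ m ih =>
      rw [Function.iterate_succ_apply', ← ih]
      exact (tilde_eq σ (ht m)).1
  apply Prod.ext
  · funext k
    have := (tilde_eq σ (ht k)).2
    rw [this, hsnd k]; rfl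
  · funext k; exact hsnd k

lemma continuous_tauSub [TopologicalSpace X] (σ : Fin n → X → X) :
    Continuous (tauSub σ) := by
  apply Continuous.subtype_mk
  have : Continuous (tau (n := n) (X := X)) := by
    refine Continuous.prodMk ?_ ?_
    · exact continuous_pi fun k => (continuous_apply (k + 1)).comp continuous_fst
    · exact continuous_pi fun k => (continuous_apply (k + 1)).comp continuous_snd
  exact this.comp continuous_subtype_val

end Aux

/-- Every point of `X̃` begins a unique infinite tail of `(X̃, σ̃)`; consequently
the covering system of `X̃` is canonically homeomorphic to `X̃` via the natural
projection. -/
theorem stmt_7 {n : ℕ} {X : Type*} [TopologicalSpace X] [T2Space X]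
    [LocallyCompactSpace X] (σ : Fin n → X → X) (hσ : ∀ i, Continuous (σ i)) :
    (∀ z : Tails σ, ∃! t : (ℕ → Fin n) × (ℕ → ↥(Tails σ)),
        t ∈ Tails (tildeσSub σ) ∧ t.2 0 = z) ∧
      ∃ e : ↥(Tails (tildeσSub σ)) ≃ₜ ↥(Tails σ),
        ∀ t : ↥(Tails (tildeσSub σ)),
          e t = ((t : (ℕ → Fin n) × (ℕ → ↥(Tails σ))).2 0 : ↥(Tails σ)) := by
  constructor
  · intro z
    refine ⟨tailOf σ z, ⟨tailOf_mem σ z, rfl⟩, ?_⟩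
    rintro t ⟨ht, h0⟩
    exact tail_unique σ z t ht h0
  · refine ⟨Homeomorph.mk
      ⟨fun t => t.1.2 0, fun z => ⟨tailOf σ z, tailOf_mem σ z⟩,
        fun t => Subtype.ext (tail_unique σ (t.1.2 0) t.1 t.2 rfl).symm,
        fun z => rfl⟩ ?_ ?_, fun t => rfl⟩
    · exact (continuous_apply 0).comp (continuous_snd.comp continuous_subtype_val)
    · apply Continuous.subtype_mk
      refine Continuous.prodMk ?_ ?_
      · exact continuous_pi fun k =>
          ((continuous_apply 0).comp (continuous_fst.comp continuous_subtype_val)).comp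
            ((continuous_tauSub σ).iterate k)
      · exact continuous_pi fun k => (continuous_tauSub σ).iterate k
end

section
/- If B ⊆ X̃ is a nonempty closed invariant set (σ̃ᵢ(B) ⊆ B for all i), then B_∞ = ⋂_{k≥0} B_k, where B₀ = B and B_{k+1} = ⋃_{i=1}^n σ̃ᵢ(B_k), is a nonempty closed bi-invariant set (invariant and σ̃ᵢ⁻¹(B_∞) ⊆ B_∞ for all i). Hence if (X̃,σ̃) has no proper nonempty closed bi-invariant subsets, it is minimal. -/
open Set

lemma tildeσ_cont {n : ℕ} {X : Type*} [TopologicalSpace X]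
    (σ : Fin n → X → X) (hσ : ∀ i, Continuous (σ i)) (i : Fin n) :
    Continuous (tildeσ σ i) := by
  apply Continuous.prodMk
  · apply continuous_pi
    intro k
    cases k with
    | zero => exact continuous_const
    | succ k => exact (continuous_apply k).comp continuous_fst
  · apply continuous_pi
    intro k
    cases k with
    | zero => exact (hσ i).comp ((continuous_apply 0).comp continuous_snd)
    | succ k => exact (continuous_apply k).comp continuous_snd

lemma tildeσ_inj {n : ℕ} {X : Type*} (σ : Fin n → X → X) (i : Fin n) :
    Function.Injective (tildeσ σ i) := by
  intro p q h
  have h1 : prepend i p.1 = prepend i q.1 := congrArg Prod.fst h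
  have h2 := congrArg Prod.snd h
  exact Prod.ext (funext fun k => congrFun h1 (k + 1))
    (funext fun k => congrFun h2 (k + 1))

lemma key_lemma {n : ℕ} {X : Type*} [TopologicalSpace X] [CompactSpace X]
    [T2Space X] (σ : Fin n → X → X) (hσ : ∀ i, Continuous (σ i))
    (hsurj : ∀ x : X, ∃ i y, σ i y = x)
    (B : Set ((ℕ → Fin n) × (ℕ → X))) (hBsub : B ⊆ Tails σ) (hBne : B.Nonempty)
    (hBcl : IsClosed B) (hBinv : ∀ i, tildeσ σ i '' B ⊆ B)
    (Bk : ℕ → Set ((ℕ → Fin n) × (ℕ → X))) (hBk0 : Bk 0 = B)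
    (hBk1 : ∀ k, Bk (k + 1) = ⋃ i, tildeσ σ i '' Bk k) :
    (⋂ k, Bk k).Nonempty ∧ IsClosed (⋂ k, Bk k) ∧ (⋂ k, Bk k) ⊆ Tails σ ∧
      (∀ i, tildeσ σ i '' (⋂ k, Bk k) ⊆ ⋂ k, Bk k) ∧
      ∀ i, Tails σ ∩ tildeσ σ i ⁻¹' (⋂ k, Bk k) ⊆ ⋂ k, Bk k := by
  obtain ⟨p0, hp0⟩ := hBne
  obtain ⟨i0, -, -⟩ := hsurj (p0.2 0)
  haveI : Nonempty (Fin n) := ⟨i0⟩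
  have hmono : ∀ k, Bk (k + 1) ⊆ Bk k := by
    intro k
    induction k with
    | zero =>
      rw [hBk1 0, hBk0]
      exact iUnion_subset fun i => hBinv i
    | succ k ih =>
      rw [hBk1 (k + 1)]
      exact iUnion_subset fun i => (image_mono ih).trans
        (by rw [hBk1 k]; exact subset_iUnion (fun j => tildeσ σ j '' Bk k) i)
  have hcl : ∀ k, IsClosed (Bk k) := by
    intro k
    induction k with
    | zero => rw [hBk0]; exact hBcl
    | succ k ih =>
      rw [hBk1 k]
      exact (isCompact_iUnion fun i =>
        ih.isCompact.image (tildeσ_cont σ hσ i)).isClosed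
  have hne : ∀ k, (Bk k).Nonempty := by
    intro k
    induction k with
    | zero => rw [hBk0]; exact ⟨p0, hp0⟩
    | succ k ih =>
      rw [hBk1 k]
      obtain ⟨q, hq⟩ := ih
      exact ⟨tildeσ σ i0 q, mem_iUnion.mpr ⟨i0, mem_image_of_mem _ hq⟩⟩
  refine ⟨?_, isClosed_iInter hcl, (iInter_subset Bk 0).trans (hBk0 ▸ hBsub),
    ?_, ?_⟩
  · exact IsCompact.nonempty_iInter_of_sequence_nonempty_isCompact_isClosed
      Bk hmono hne (hcl 0).isCompact hcl
  · intro i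
    rw [subset_iInter_iff]
    intro m
    cases m with
    | zero =>
      rw [hBk0]
      exact (image_mono ((iInter_subset Bk 0).trans hBk0.subset)).trans
        (hBinv i)
    | succ m =>
      rw [hBk1 m]
      exact (image_mono (iInter_subset Bk m)).trans
        (subset_iUnion (fun j => tildeσ σ j '' Bk m) i)
  · rintro i p ⟨-, hpB⟩
    rw [mem_preimage, mem_iInter] at hpB
    rw [mem_iInter]
    intro m
    have h := hpB (m + 1)
    rw [hBk1 m, mem_iUnion] at h
    obtain ⟨j, q, hq, heq⟩ := h
    have hji : j = i := by
      have := congrFun (congrArg Prod.fst heq) 0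
      exact this
    subst hji
    rwa [tildeσ_inj σ j heq] at hq

/-- If `B ⊆ X̃` is a nonempty closed invariant set, then `B_∞ = ⋂_k B_k`, where
`B₀ = B` and `B_{k+1} = ⋃ᵢ σ̃ᵢ(B_k)`, is a nonempty closed bi-invariant set.
Hence if `(X̃, σ̃)` has no proper nonempty closed bi-invariant subsets, it is
minimal. -/
theorem stmt_13 {n : ℕ} {X : Type*} [TopologicalSpace X] [CompactSpace X]
    [T2Space X] (σ : Fin n → X → X) (hσ : ∀ i, Continuous (σ i))
    (hsurj : ∀ x : X, ∃ i y, σ i y = x)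
    (B : Set ((ℕ → Fin n) × (ℕ → X))) (hBsub : B ⊆ Tails σ) (hBne : B.Nonempty)
    (hBcl : IsClosed B) (hBinv : ∀ i, tildeσ σ i '' B ⊆ B) :
    (∀ Bk : ℕ → Set ((ℕ → Fin n) × (ℕ → X)), Bk 0 = B →
      (∀ k, Bk (k + 1) = ⋃ i, tildeσ σ i '' Bk k) →
      (⋂ k, Bk k).Nonempty ∧ IsClosed (⋂ k, Bk k) ∧ (⋂ k, Bk k) ⊆ Tails σ ∧
        (∀ i, tildeσ σ i '' (⋂ k, Bk k) ⊆ ⋂ k, Bk k) ∧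
        ∀ i, Tails σ ∩ tildeσ σ i ⁻¹' (⋂ k, Bk k) ⊆ ⋂ k, Bk k) ∧
    ((∀ C : Set ((ℕ → Fin n) × (ℕ → X)), C ⊆ Tails σ → C.Nonempty →
        IsClosed C → (∀ i, tildeσ σ i '' C ⊆ C) →
        (∀ i, Tails σ ∩ tildeσ σ i ⁻¹' C ⊆ C) → C = Tails σ) →
      ∀ C : Set ((ℕ → Fin n) × (ℕ → X)), C ⊆ Tails σ → IsClosed C →
        (∀ i, tildeσ σ i '' C ⊆ C) → C = ∅ ∨ C = Tails σ) := by
  constructor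
  · intro Bk hBk0 hBk1
    exact key_lemma σ hσ hsurj B hBsub hBne hBcl hBinv Bk hBk0 hBk1
  · intro hmin C hCsub hCcl hCinv
    rcases C.eq_empty_or_nonempty with h | hCne
    · exact Or.inl h
    right
    set Bk : ℕ → Set ((ℕ → Fin n) × (ℕ → X)) :=
      fun k => Nat.rec C (fun _ S => ⋃ i, tildeσ σ i '' S) k with hBk
    obtain ⟨h1, h2, h3, h4, h5⟩ :=
      key_lemma σ hσ hsurj C hCsub hCne hCcl hCinv Bk rfl (fun k => rfl)
    have hT : (⋂ k, Bk k) = Tails σ := hmin _ h3 h1 h2 h4 h5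
    exact hCsub.antisymm (hT ▸ iInter_subset Bk 0)
end

section
/- If (X,σ) is a minimal compact multivariable dynamical system, then the covering system (X̃,σ̃) is minimal: for every point (𝐢,𝐱) ∈ X̃, the forward orbit {σ̃_w(𝐢,𝐱) : w a word in {1,…,n}} is dense in X̃. -/
open Set

/-- For a word `w = i₁…i_k`, the composition `σ_w = σ_{i₁} ∘ ⋯ ∘ σ_{i_k}`. -/
def sigmaW {n : ℕ} {X : Type*} (σ : Fin n → X → X) (w : List (Fin n)) : X → X :=
  w.foldr (fun i f => σ i ∘ f) id

lemma tildeσW_cons {n : ℕ} {X : Type*} (σ : Fin n → X → X) (i : Fin n)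
    (w : List (Fin n)) (z : (ℕ → Fin n) × (ℕ → X)) :
    tildeσW σ (i :: w) z = tildeσ σ i (tildeσW σ w z) := rfl

lemma sigmaW_cons {n : ℕ} {X : Type*} (σ : Fin n → X → X) (i : Fin n)
    (w : List (Fin n)) (x : X) : sigmaW σ (i :: w) x = σ i (sigmaW σ w x) := rfl

lemma sigmaW_append {n : ℕ} {X : Type*} (σ : Fin n → X → X) (a b : List (Fin n)) (x : X) :
    sigmaW σ (a ++ b) x = sigmaW σ a (sigmaW σ b x) := by
  induction a with
  | nil => rfl
  | cons i a ih => simp [sigmaW_cons, ih]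

lemma sigmaW_continuous {n : ℕ} {X : Type*} [TopologicalSpace X]
    (σ : Fin n → X → X) (hσ : ∀ i, Continuous (σ i)) (w : List (Fin n)) :
    Continuous (sigmaW σ w) := by
  induction w with
  | nil => exact continuous_id
  | cons i w ih => exact (hσ i).comp ih

lemma tildeσW_snd {n : ℕ} {X : Type*} (σ : Fin n → X → X)
    (z : (ℕ → Fin n) × (ℕ → X)) (w : List (Fin n)) (k : ℕ) (hk : k ≤ w.length) :
    (tildeσW σ w z).2 k = sigmaW σ (w.drop k) (z.2 0) := by
  induction w generalizing k with
  | nil =>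
    have : k = 0 := Nat.le_zero.mp hk
    subst this; rfl
  | cons i w ih =>
    cases k with
    | zero =>
      show σ i ((tildeσW σ w z).2 0) = σ i (sigmaW σ w (z.2 0))
      rw [ih 0 (Nat.zero_le _)]; rfl
    | succ k =>
      show (tildeσW σ w z).2 k = sigmaW σ (w.drop k) (z.2 0)
      exact ih k (Nat.succ_le_succ_iff.mp hk)

lemma tildeσW_fst {n : ℕ} {X : Type*} (σ : Fin n → X → X)
    (z : (ℕ → Fin n) × (ℕ → X)) (w : List (Fin n)) (k : ℕ) (hk : k < w.length) :
    (tildeσW σ w z).1 k = w[k] := by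
  induction w generalizing k with
  | nil => simp at hk
  | cons i w ih =>
    cases k with
    | zero => rfl
    | succ k =>
      simp only [List.getElem_cons_succ]
      exact ih k (Nat.lt_of_succ_lt_succ (by simpa using hk))

lemma tails_eval {n : ℕ} {X : Type*} {σ : Fin n → X → X} {j : ℕ → Fin n} {y : ℕ → X}
    (ht : (j, y) ∈ Tails σ) (m k : ℕ) :
    sigmaW σ (List.ofFn fun r : Fin k => j (m + r)) (y (m + k)) = y m := by
  induction k generalizing m with
  | zero => simp [sigmaW]
  | succ k ih =>
    rw [List.ofFn_succ, sigmaW_cons]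
    have h1 : (fun r : Fin k => j (m + (r.succ : Fin (k+1)).val))
        = fun r : Fin k => j ((m + 1) + r.val) := by
      funext r
      congr 1
      simp [Fin.val_succ]
      omega
    have h2 : m + (k + 1) = (m + 1) + k := by omega
    rw [h1, h2, ih (m + 1)]
    simpa using ht m

lemma ofFn_drop {α : Type*} (N m : ℕ) (hm : m ≤ N) (f : ℕ → α) :
    (List.ofFn fun r : Fin (N + 1) => f r).drop m
      = List.ofFn fun r : Fin (N + 1 - m) => f (m + r) := by
  apply List.ext_getElem
  · simp
  · intro i h1 h2
    simp only [List.length_drop, List.length_ofFn] at h1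
    rw [List.getElem_drop, List.getElem_ofFn, List.getElem_ofFn]

/-- If `(X, σ)` is a minimal compact system (every forward orbit is dense),
then the covering system `(X̃, σ̃)` is minimal: every forward orbit
`{σ̃_w(𝐢,𝐱) : w}` is dense in `X̃`. -/
theorem stmt_14 {n : ℕ} {X : Type*} [TopologicalSpace X] [CompactSpace X]
    [T2Space X] (σ : Fin n → X → X) (hσ : ∀ i, Continuous (σ i))
    (hmin : ∀ x : X, Dense {y | ∃ w : List (Fin n), sigmaW σ w x = y}) :
    ∀ z ∈ Tails σ,
      Tails σ ⊆ closure {t | ∃ w : List (Fin n), tildeσW σ w z = t} := by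
  intro z hz t ht
  obtain ⟨j, y⟩ := t
  rw [mem_closure_iff_nhds]
  intro U hU
  rw [nhds_prod_eq, Filter.mem_prod_iff] at hU
  obtain ⟨A, hA, B, hB, hAB⟩ := hU
  rw [nhds_pi, Filter.mem_pi] at hA hB
  obtain ⟨I, hIfin, As, hAs, hIA⟩ := hA
  obtain ⟨J, hJfin, Bs, hBs, hJB⟩ := hB
  set N : ℕ := hIfin.toFinset.sup id ⊔ hJfin.toFinset.sup id with hN
  have hIle : ∀ i ∈ I, i ≤ N := fun i hi =>
    le_sup_of_le_left (Finset.le_sup (f := id) (hIfin.mem_toFinset.mpr hi))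
  have hJle : ∀ m ∈ J, m ≤ N := fun m hm =>
    le_sup_of_le_right (Finset.le_sup (f := id) (hJfin.mem_toFinset.mpr hm))
  set P : List (Fin n) := List.ofFn fun r : Fin (N + 1) => j r with hP
  have hPlen : P.length = N + 1 := by simp [hP]
  set U' : Set X := ⋂ m ∈ hJfin.toFinset, (sigmaW σ (P.drop m)) ⁻¹' (Bs m) with hU'
  have hval : ∀ m ∈ J, sigmaW σ (P.drop m) (y (N + 1)) = y m := by
    intro m hm
    have hmN : m ≤ N := hJle m hm
    rw [hP, ofFn_drop N m hmN]
    have h2 : m + (N + 1 - m) = N + 1 := by omega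
    have h3 := tails_eval ht m (N + 1 - m)
    rwa [h2] at h3
  have hU'nhds : U' ∈ nhds (y (N + 1)) := by
    rw [hU']
    refine (Filter.biInter_finset_mem _).mpr fun m hm => ?_
    have hmJ : m ∈ J := hJfin.mem_toFinset.mp hm
    refine ContinuousAt.preimage_mem_nhds
      (sigmaW_continuous σ hσ (P.drop m)).continuousAt ?_
    rw [hval m hmJ]
    exact hBs m
  obtain ⟨x', hx'U', w', hw'⟩ :=
    mem_closure_iff_nhds.mp ((hmin (z.2 0)).closure_eq ▸ mem_univ (y (N + 1))) U' hU'nhds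
  refine ⟨tildeσW σ (P ++ w') z, ?_, ⟨P ++ w', rfl⟩⟩
  apply hAB
  refine ⟨?_, ?_⟩
  · apply hIA
    intro i hi
    have hiN : i ≤ N := hIle i hi
    have hlt : i < P.length := by omega
    have hlt2 : i < (P ++ w').length := by simp; omega
    rw [tildeσW_fst σ z (P ++ w') i hlt2, List.getElem_append_left hlt]
    have : P[i]'hlt = j i := by simp only [hP, List.getElem_ofFn]
    rw [this]
    exact mem_of_mem_nhds (hAs i)
  · apply hJB
    intro m hm
    have hmN : m ≤ N := hJle m hm
    have hle : m ≤ (P ++ w').length := by simp; omega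
    rw [tildeσW_snd σ z (P ++ w') m hle,
      List.drop_append_of_le_length (by omega), sigmaW_append, hw']
    exact Set.mem_iInter₂.mp hx'U' m (hJfin.mem_toFinset.mpr hm)
end
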